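/- Let P(z) = c_0 + c_1 z + ... + c_n z^n be a polynomial with real coefficients satisfying c_n > c_{n-1} > ... > c_0 > 0. Then every complex root z of P satisfies |z| < 1. -/

import Mathlib

lemma ek_key (c : ℕ → ℂ) (z : ℂ) : ∀ n, (z - 1) * ∑ i ∈ Finset.range (n+1), c i * z^i
    = c n * z^(n+1) - (c 0 + ∑ i ∈ Finset.range n, (c (i+1) - c i) * z^(i+1)) := by
  intro n
  induction n with
  | zero => simp; ring
  | succ m ih =>
    rw [Finset.sum_range_succ (fun i => c i * z ^ i) (m+1),
      Finset.sum_range_succ (fun i => (c (i+1) - c i) * z^(i+1)) m]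
    linear_combination ih

set_option maxHeartbeats 1600000 in
theorem stmt3 (P : Polynomial ℝ) (hdeg : 1 ≤ P.natDegree)
    (hpos : ∀ i, i ≤ P.natDegree → 0 < P.coeff i)
    (hinc : ∀ i, i < P.natDegree → P.coeff i < P.coeff (i + 1)) :
    ∀ z : ℂ, Polynomial.aeval z P = 0 → ‖z‖ < 1 := by
  intro z hz
  set n := P.natDegree with hn
  set c : ℕ → ℝ := fun i => P.coeff i with hc
  have h0 : ∑ i ∈ Finset.range (n+1), (c i : ℂ) * z^i = 0 := by
    rw [← hz, Polynomial.aeval_eq_sum_range]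
    refine Finset.sum_congr rfl fun i _ => ?_
    rw [Algebra.smul_def]
    rfl
  have hz1 : z ≠ 1 := by
    intro h
    rw [h] at h0
    simp only [one_pow, mul_one] at h0
    have : ((∑ i ∈ Finset.range (n+1), c i : ℝ) : ℂ) = 0 := by push_cast; exact h0
    have hsum : (∑ i ∈ Finset.range (n+1), c i) = 0 := by exact_mod_cast this
    have hposum : 0 < ∑ i ∈ Finset.range (n+1), c i := by
      apply Finset.sum_pos
      · intro i hi
        exact hpos i (Nat.lt_succ_iff.mp (Finset.mem_range.mp hi))
      · exact ⟨0, Finset.mem_range.mpr (Nat.succ_pos n)⟩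
    linarith
  by_contra hlt
  push_neg at hlt
  have hEq : (c n : ℂ) * z^(n+1)
      = (c 0 : ℂ) + ∑ i ∈ Finset.range n, ((c (i+1) : ℂ) - c i) * z^(i+1) := by
    have h := ek_key (fun i => (c i : ℂ)) z n
    rw [h0, mul_zero] at h
    have h2 := sub_eq_zero.mp h.symm
    simpa using h2
  have habs : c n * ‖z‖ ^ (n+1)
      = ‖(c 0 : ℂ) + ∑ i ∈ Finset.range n, ((c (i+1) : ℂ) - c i) * z^(i+1)‖ := by
    rw [← hEq, norm_mul, norm_pow, Complex.norm_real, Real.norm_eq_abs,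
      abs_of_pos (hpos n le_rfl)]
  have hcpos : ∀ i, i ≤ n → 0 < c i := hpos
  have habs1 : (1:ℝ) ≤ ‖z‖ := hlt
  have hc0 : 0 < c 0 := hcpos 0 (Nat.zero_le n)
  have htel : ∑ i ∈ Finset.range n, (c (i+1) - c i) = c n - c 0 :=
    Finset.sum_range_sub c n
  have hcn0 : c 0 < c n := by
    have hspos : 0 < ∑ i ∈ Finset.range n, (c (i+1) - c i) := by
      apply Finset.sum_pos
      · intro i hi
        exact sub_pos.mpr (hinc i (Finset.mem_range.mp hi))
      · exact ⟨0, Finset.mem_range.mpr (by omega)⟩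
    linarith [htel ▸ hspos]
  rcases eq_or_lt_of_le habs1 with heq1 | hgt1
  · -- |z| = 1 case
    have hA : ‖z‖ = 1 := heq1.symm
    obtain ⟨m, hm⟩ : ∃ m, n = m + 1 := ⟨n - 1, by omega⟩
    -- c n = |c 0 + S|
    have hcn : c n = ‖(c 0 : ℂ) + ∑ i ∈ Finset.range n, ((c (i+1) : ℂ) - c i) * z^(i+1)‖ := by
      rw [← habs, hA, one_pow, mul_one]
    -- split the sum
    have hsplit : ∑ i ∈ Finset.range n, ((c (i+1) : ℂ) - c i) * z^(i+1)
        = (∑ i ∈ Finset.range m, ((c (i+2) : ℂ) - c (i+1)) * z^(i+2)) + ((c 1 : ℂ) - c 0) * z := by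
      rw [hm, Finset.sum_range_succ' (fun i => ((c (i+1) : ℂ) - c i) * z^(i+1)) m]
      simp
    -- strict inequality at the first term
    have hd1 : 0 < c 1 - c 0 := sub_pos.mpr (hinc 0 (by omega))
    have hre : z.re < 1 := by
      have hnsq : z.re * z.re + z.im * z.im = 1 := by
        have := Complex.sq_norm z
        rw [hA] at this
        have := this.symm
        rw [Complex.normSq_apply] at this
        nlinarith [this]
      by_contra hge
      push_neg at hge
      have him : z.im = 0 := by nlinarith
      have hre1 : z.re = 1 := by nlinarith
      exact hz1 (Complex.ext hre1 him)
    have hstrict : ‖(c 0 : ℂ) + ((c 1 : ℂ) - c 0) * z‖ < c 1 := by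
      have hw : ((c 0 : ℂ) + ((c 1 : ℂ) - c 0) * z).re = c 0 + (c 1 - c 0) * z.re := by
        simp [Complex.add_re, Complex.mul_re, Complex.sub_re, Complex.ofReal_re, Complex.ofReal_im]
      have hwi : ((c 0 : ℂ) + ((c 1 : ℂ) - c 0) * z).im = (c 1 - c 0) * z.im := by
        simp [Complex.add_im, Complex.mul_im, Complex.sub_im, Complex.ofReal_re, Complex.ofReal_im]
      have hsq : ‖(c 0 : ℂ) + ((c 1 : ℂ) - c 0) * z‖ ^ 2
          = (c 0 + (c 1 - c 0) * z.re)^2 + ((c 1 - c 0) * z.im)^2 := by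
        rw [Complex.sq_norm, Complex.normSq_apply, hw, hwi]; ring
      have hnsq : z.re * z.re + z.im * z.im = 1 := by
        have h2 := Complex.sq_norm z
        rw [hA] at h2
        have h3 := h2.symm
        rw [Complex.normSq_apply] at h3
        nlinarith [h3]
      have hid : (c 0 + (c 1 - c 0) * z.re)^2 + ((c 1 - c 0) * z.im)^2
          = c 1 ^ 2 - 2 * c 0 * (c 1 - c 0) * (1 - z.re) := by
        linear_combination ((c 1 - c 0)^2) * hnsq
      have hlt2 : ‖(c 0 : ℂ) + ((c 1 : ℂ) - c 0) * z‖ ^ 2 < c 1 ^ 2 := by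
        rw [hsq, hid]
        nlinarith [mul_pos (mul_pos hc0 hd1) (sub_pos.mpr hre)]
      have hc1 : (0:ℝ) ≤ c 1 := le_of_lt (hcpos 1 (by omega))
      exact lt_of_pow_lt_pow_left₀ 2 hc1 hlt2
    -- bound the tail
    have htail : ‖∑ i ∈ Finset.range m, ((c (i+2) : ℂ) - c (i+1)) * z^(i+2)‖
        ≤ c n - c 1 := by
      calc ‖∑ i ∈ Finset.range m, ((c (i+2) : ℂ) - c (i+1)) * z^(i+2)‖
          ≤ ∑ i ∈ Finset.range m, ‖((c (i+2) : ℂ) - c (i+1)) * z^(i+2)‖ :=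
            norm_sum_le _ _
        _ = ∑ i ∈ Finset.range m, (c (i+2) - c (i+1)) := by
            refine Finset.sum_congr rfl fun i hi => ?_
            rw [norm_mul, norm_pow, hA, one_pow, mul_one, ← Complex.ofReal_sub,
              Complex.norm_real, Real.norm_eq_abs, abs_of_pos (sub_pos.mpr (hinc (i+1) (by rw [Finset.mem_range] at hi; omega)))]
        _ = c (m+1) - c 1 := Finset.sum_range_sub (fun i => c (i+1)) m
        _ = c n - c 1 := by rw [hm]
    have hfinal : c n < c n := by
      calc c n = ‖((c 0 : ℂ) + ((c 1 : ℂ) - c 0) * z)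
            + ∑ i ∈ Finset.range m, ((c (i+2) : ℂ) - c (i+1)) * z^(i+2)‖ := by
            rw [hcn, hsplit]; congr 1; ring
        _ ≤ ‖(c 0 : ℂ) + ((c 1 : ℂ) - c 0) * z‖
            + ‖∑ i ∈ Finset.range m, ((c (i+2) : ℂ) - c (i+1)) * z^(i+2)‖ :=
            norm_add_le _ _
        _ < c 1 + (c n - c 1) := by
            have := add_lt_add_of_lt_of_le hstrict htail
            linarith
        _ = c n := by ring
    exact absurd hfinal (lt_irrefl _)
  · -- |z| > 1 case
    have hterm : ∀ i ∈ Finset.range n,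
        ‖((c (i+1) : ℂ) - c i) * z^(i+1)‖ ≤ (c (i+1) - c i) * ‖z‖ ^ n := by
      intro i hi
      rw [Finset.mem_range] at hi
      have hd : (0:ℝ) < c (i+1) - c i := sub_pos.mpr (hinc i hi)
      rw [norm_mul, norm_pow]
      have h1 : ‖(c (i+1) : ℂ) - c i‖ = c (i+1) - c i := by
        rw [← Complex.ofReal_sub, Complex.norm_real, Real.norm_eq_abs, abs_of_pos hd]
      rw [h1]
      have h2 : ‖z‖ ^ (i+1) ≤ ‖z‖ ^ n :=
        pow_le_pow_right₀ habs1 hi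
      nlinarith
    have hbound : c n * ‖z‖ ^ (n+1) ≤ c 0 + (c n - c 0) * ‖z‖ ^ n := by
      rw [habs]
      calc ‖(c 0 : ℂ) + ∑ i ∈ Finset.range n, ((c (i+1) : ℂ) - c i) * z^(i+1)‖
          ≤ ‖(c 0 : ℂ)‖ + ‖∑ i ∈ Finset.range n, ((c (i+1) : ℂ) - c i) * z^(i+1)‖ := norm_add_le _ _
        _ ≤ c 0 + ∑ i ∈ Finset.range n, (c (i+1) - c i) * ‖z‖ ^ n := by
            gcongr
            · rw [Complex.norm_real, Real.norm_eq_abs, abs_of_pos hc0]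
            · exact (norm_sum_le _ _).trans (Finset.sum_le_sum hterm)
        _ = c 0 + (c n - c 0) * ‖z‖ ^ n := by
            rw [← Finset.sum_mul, htel]
    have hp : (1:ℝ) < ‖z‖ ^ n := one_lt_pow₀ hgt1 (by omega)
    have hp2 : ‖z‖ ^ n < ‖z‖ ^ (n+1) := by
      apply pow_lt_pow_right₀ hgt1 (by omega)
    nlinarith [hbound]
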